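/- arXiv:math/9404225 — 2 statements merged into one kernel-verified Lean document; each statement's English description precedes it below -/
import Mathlib

section
/- The monic polynomials P̂_n(x) := d^n q^{n(n-1)/2} ₂φ₁(q^{-n}, c/x; 0; q, -qx/d) (monic big q-Jacobi polynomials with a=b=0) satisfy the three-term recurrence x·P̂_n(x) = P̂_{n+1}(x) + q^n(c-d)·P̂_n(x) + q^{n-1}cd(1-q^n)·P̂_{n-1}(x) for all n ≥ 1, with P̂_0(x)=1 and x·P̂_0(x) = P̂_1(x) + (c-d)·P̂_0(x). -/
/-- finite q-shifted factorial `(a;q)_k = ∏_{j=0}^{k-1} (1 - a q^j)` -/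
noncomputable def qPoch (q a : ℝ) (k : ℕ) : ℝ := ∏ j ∈ Finset.range k, (1 - a * q ^ j)

/-- The monic big q-Jacobi polynomial with `a = b = 0`, via its series representation:
`P̂_n(x) = d^n q^{n(n-1)/2} ₂φ₁(q^{-n}, c/x; 0; q, -qx/d)`. -/
noncomputable def PhatSeries (q c d : ℝ) (n : ℕ) (x : ℝ) : ℝ :=
  d ^ n * q ^ (n * (n - 1) / 2) *
    ∑ k ∈ Finset.range (n + 1),
      qPoch q (q ^ (-(n : ℤ))) k * qPoch q (c / x) k / qPoch q q k * (-(q * x / d)) ^ k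

namespace BigQJ

noncomputable def Bc (q d : ℝ) (n k : ℕ) : ℝ :=
  qPoch q q n / (qPoch q q k * qPoch q q (n - k)) * q ^ ((n - k) * (n - k - 1) / 2) *
    d ^ (n - k)

noncomputable def Bz (q d : ℝ) (n k : ℕ) : ℝ := if k ≤ n then Bc q d n k else 0

noncomputable def pik (q c x : ℝ) (k : ℕ) : ℝ := ∏ j ∈ Finset.range k, (x - c * q ^ j)

lemma qPoch_succ (q a : ℝ) (k : ℕ) : qPoch q a (k + 1) = qPoch q a k * (1 - a * q ^ k) :=
  Finset.prod_range_succ _ _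

lemma pik_succ (q c x : ℝ) (k : ℕ) : pik q c x (k + 1) = pik q c x k * (x - c * q ^ k) :=
  Finset.prod_range_succ _ _

variable {q c d x : ℝ}

lemma fac_pos (hq0 : 0 < q) (hq1 : q < 1) (k : ℕ) : 0 < 1 - q * q ^ k := by
  have h1 : q ^ k ≤ 1 := pow_le_one₀ hq0.le hq1.le
  nlinarith

lemma fac_ne (hq0 : 0 < q) (hq1 : q < 1) (k : ℕ) : (1 : ℝ) - q * q ^ k ≠ 0 :=
  (fac_pos hq0 hq1 k).ne'

lemma f_pos (hq0 : 0 < q) (hq1 : q < 1) (k : ℕ) : 0 < qPoch q q k := by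
  induction k with
  | zero => simp [qPoch]
  | succ k ih =>
    rw [qPoch_succ]
    exact mul_pos ih (fac_pos hq0 hq1 k)

lemma f_ne (hq0 : 0 < q) (hq1 : q < 1) (k : ℕ) : qPoch q q k ≠ 0 := (f_pos hq0 hq1 k).ne'

lemma Bz_of_le (n k : ℕ) (h : k ≤ n) : Bz q d n k = Bc q d n k := if_pos h

lemma Bz_of_gt (n k : ℕ) (h : n < k) : Bz q d n k = 0 := if_neg (by omega)

lemma Bc_zero (hq0 : 0 < q) (hq1 : q < 1) (n : ℕ) :
    Bc q d n 0 = q ^ (n * (n - 1) / 2) * d ^ n := by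
  rw [Bc]
  simp only [Nat.sub_zero]
  rw [show qPoch q q 0 = 1 from rfl, one_mul, div_self (f_ne hq0 hq1 n), one_mul]

lemma Bc_self (hq0 : 0 < q) (hq1 : q < 1) (n : ℕ) : Bc q d n n = 1 := by
  rw [Bc]
  simp only [Nat.sub_self]
  rw [show qPoch q q 0 = 1 from rfl, mul_one, div_self (f_ne hq0 hq1 n)]
  norm_num

/-- (c/x;q)_k x^k = ∏ (x - c q^j) -/
lemma qc_pik (hx : x ≠ 0) (k : ℕ) : qPoch q (c / x) k * x ^ k = pik q c x k := by
  induction k with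
  | zero => simp [qPoch, pik]
  | succ k ih =>
    rw [qPoch_succ, pik_succ, pow_succ, ← ih]
    field_simp

/-- (q^{-n};q)_k (q^n)^k = ∏ (q^n - q^j) -/
lemma qa_W (hq : q ≠ 0) (n : ℕ) (k : ℕ) :
    qPoch q (q ^ (-(n : ℤ))) k * (q ^ n) ^ k
      = ∏ j ∈ Finset.range k, (q ^ n - q ^ j) := by
  have hA : (q : ℝ) ^ (-(n : ℤ)) = (q ^ n)⁻¹ := by
    rw [zpow_neg, zpow_natCast]
  have hqn : (q : ℝ) ^ n ≠ 0 := pow_ne_zero _ hq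
  induction k with
  | zero => simp [qPoch]
  | succ k ih =>
    rw [qPoch_succ, Finset.prod_range_succ, pow_succ, ← ih, hA]
    field_simp

lemma tri (t : ℕ) : (t + 1) * t / 2 = t * (t - 1) / 2 + t := by
  have h1 : (t + 1).choose 2 = (t + 1) * (t + 1 - 1) / 2 := Nat.choose_two_right (t + 1)
  have h2 : t.choose 2 = t * (t - 1) / 2 := Nat.choose_two_right t
  have h3 : (t + 1).choose 2 = t.choose 1 + t.choose 2 := Nat.choose_succ_succ t 1
  have h4 : t.choose 1 = t := Nat.choose_one_right t
  simp only [Nat.add_sub_cancel] at h1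
  omega

set_option maxHeartbeats 1000000 in
lemma C2 (hq0 : 0 < q) (hq1 : q < 1) (k t : ℕ) :
    (-q) * (q ^ (k + 1 + t) - q ^ k) * (Bc q d (k + 1 + t) k * qPoch q q k)
      = Bc q d (k + 1 + t) (k + 1) * qPoch q q (k + 1) * q ^ (k + 1 + t) * d := by
  have e1 : k + 1 + t - k = t + 1 := by omega
  have e2 : k + 1 + t - (k + 1) = t := by omega
  rw [Bc, Bc, e1, e2]
  have e3 : t + 1 - 1 = t := by omega
  rw [e3, tri t]
  rw [qPoch_succ q q k, qPoch_succ q q t]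
  have h1 := f_ne hq0 hq1 k
  have h2 := f_ne hq0 hq1 t
  have h3 := fac_ne hq0 hq1 k
  have h4 := fac_ne hq0 hq1 t
  simp only [pow_add, pow_succ, pow_one, pow_zero]
  field_simp
  ring

lemma C (hq0 : 0 < q) (hq1 : q < 1) (n : ℕ) :
    ∀ k, k ≤ n →
      d ^ n * q ^ (n * (n - 1) / 2) * (-q) ^ k * (∏ j ∈ Finset.range k, (q ^ n - q ^ j))
        = Bc q d n k * qPoch q q k * (q ^ n) ^ k * d ^ k := by
  intro k
  induction k with
  | zero =>
    intro _
    simp only [pow_zero, mul_one, Finset.range_zero, Finset.prod_empty]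
    rw [show qPoch q q 0 = 1 from rfl, Bc_zero hq0 hq1, mul_one]
    ring
  | succ k ih =>
    intro hk
    have hk' : k ≤ n := by omega
    have ihh := ih hk'
    obtain ⟨t, rfl⟩ : ∃ t, n = k + 1 + t := ⟨n - (k + 1), by omega⟩
    calc d ^ (k + 1 + t) * q ^ ((k + 1 + t) * (k + 1 + t - 1) / 2) * (-q) ^ (k + 1) *
          ∏ j ∈ Finset.range (k + 1), (q ^ (k + 1 + t) - q ^ j)
        = (-q) * (q ^ (k + 1 + t) - q ^ k) *
            (d ^ (k + 1 + t) * q ^ ((k + 1 + t) * (k + 1 + t - 1) / 2) * (-q) ^ k *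
              ∏ j ∈ Finset.range k, (q ^ (k + 1 + t) - q ^ j)) := by
          rw [Finset.prod_range_succ, pow_succ]
          ring
      _ = (-q) * (q ^ (k + 1 + t) - q ^ k) *
            (Bc q d (k + 1 + t) k * qPoch q q k * (q ^ (k + 1 + t)) ^ k * d ^ k) := by
          rw [ihh]
      _ = (Bc q d (k + 1 + t) (k + 1) * qPoch q q (k + 1) * q ^ (k + 1 + t) * d) *
            ((q ^ (k + 1 + t)) ^ k * d ^ k) := by
          rw [← C2 hq0 hq1]
          ring
      _ = Bc q d (k + 1 + t) (k + 1) * qPoch q q (k + 1) * (q ^ (k + 1 + t)) ^ (k + 1) *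
            d ^ (k + 1) := by
          rw [pow_succ, pow_succ]
          ring

set_option maxHeartbeats 1000000 in
lemma term_eq (hq0 : 0 < q) (hq1 : q < 1) (hd : d ≠ 0) (hx : x ≠ 0) (n k : ℕ)
    (hk : k ≤ n) :
    d ^ n * q ^ (n * (n - 1) / 2) *
      (qPoch q (q ^ (-(n : ℤ))) k * qPoch q (c / x) k / qPoch q q k * (-(q * x / d)) ^ k)
      = Bc q d n k * pik q c x k := by
  have hq : q ≠ 0 := hq0.ne'
  have hqn : (q : ℝ) ^ n ≠ 0 := pow_ne_zero _ hq
  have hfk := f_ne hq0 hq1 k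
  have hdk : (d : ℝ) ^ k ≠ 0 := pow_ne_zero _ hd
  have hC := C (d := d) hq0 hq1 n k hk
  rw [← qa_W hq n k] at hC
  rw [← qc_pik (c := c) hx k]
  have key : d ^ n * q ^ (n * (n - 1) / 2) * (-q) ^ k * qPoch q (q ^ (-(n : ℤ))) k
      = Bc q d n k * qPoch q q k * d ^ k := by
    have h' : (d ^ n * q ^ (n * (n - 1) / 2) * (-q) ^ k * qPoch q (q ^ (-(n : ℤ))) k) *
        (q ^ n) ^ k = (Bc q d n k * qPoch q q k * d ^ k) * (q ^ n) ^ k := by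
      linear_combination hC
    exact mul_right_cancel₀ (pow_ne_zero k hqn) h'
  have hneg : (-(q * x / d)) ^ k = (-q) ^ k * x ^ k / d ^ k := by
    rw [show -(q * x / d) = (-q) * x / d by ring, div_pow, mul_pow]
  rw [hneg]
  calc d ^ n * q ^ (n * (n - 1) / 2) *
        (qPoch q (q ^ (-(n : ℤ))) k * qPoch q (c / x) k / qPoch q q k *
          ((-q) ^ k * x ^ k / d ^ k))
      = (d ^ n * q ^ (n * (n - 1) / 2) * (-q) ^ k * qPoch q (q ^ (-(n : ℤ))) k) *
          (qPoch q (c / x) k * x ^ k) / (qPoch q q k * d ^ k) := by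
        field_simp
    _ = (Bc q d n k * qPoch q q k * d ^ k) * (qPoch q (c / x) k * x ^ k) /
          (qPoch q q k * d ^ k) := by rw [key]
    _ = Bc q d n k * (qPoch q (c / x) k * x ^ k) := by
        field_simp

lemma Phat_eq (hq0 : 0 < q) (hq1 : q < 1) (hd : d ≠ 0) (hx : x ≠ 0) (n : ℕ) :
    PhatSeries q c d n x = ∑ k ∈ Finset.range (n + 1), Bc q d n k * pik q c x k := by
  rw [PhatSeries, Finset.mul_sum]
  refine Finset.sum_congr rfl fun k hk => ?_
  exact term_eq hq0 hq1 hd hx n k (by have := Finset.mem_range.mp hk; omega)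

lemma sum_ext (n N : ℕ) (h : n + 1 ≤ N) :
    ∑ k ∈ Finset.range (n + 1), Bc q d n k * pik q c x k
      = ∑ k ∈ Finset.range N, Bz q d n k * pik q c x k := by
  have h1 : ∑ k ∈ Finset.range (n + 1), Bz q d n k * pik q c x k
      = ∑ k ∈ Finset.range N, Bz q d n k * pik q c x k := by
    refine Finset.sum_subset (Finset.range_subset_range.mpr h) fun k hk hk2 => ?_
    have hnk : n < k := by
      have := Finset.mem_range.mp hk
      have h3 : ¬ k < n + 1 := fun hh => hk2 (Finset.mem_range.mpr hh)
      omega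
    rw [Bz_of_gt n k hnk, zero_mul]
  rw [← h1]
  refine Finset.sum_congr rfl fun k hk => ?_
  rw [Bz_of_le n k (by have := Finset.mem_range.mp hk; omega)]

lemma sum_ext' (n N M : ℕ) (h : n + 1 ≤ N) (h2 : n + 1 ≤ M) :
    ∑ k ∈ Finset.range N, Bz q d n k * pik q c x k
      = ∑ k ∈ Finset.range M, Bz q d n k * pik q c x k :=
  (sum_ext n N h).symm.trans (sum_ext n M h2)

set_option maxHeartbeats 2000000 in
/-- the general middle-range coefficient identity -/
lemma gen (hq0 : 0 < q) (hq1 : q < 1) (hd : d ≠ 0) (j r : ℕ) :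
    Bc q d (j + r + 2) j + c * q ^ (j + 1) * Bc q d (j + r + 2) (j + 1)
      = Bc q d (j + r + 3) (j + 1) + q ^ (j + r + 2) * (c - d) * Bc q d (j + r + 2) (j + 1)
        + q ^ (j + r + 1) * c * d * (1 - q ^ (j + r + 2)) * Bc q d (j + r + 1) (j + 1) := by
  have e1 : j + r + 2 - j = r + 2 := by omega
  have e2 : j + r + 2 - (j + 1) = r + 1 := by omega
  have e3 : j + r + 3 - (j + 1) = r + 2 := by omega
  have e4 : j + r + 1 - (j + 1) = r := by omega
  rw [Bc, Bc, Bc, Bc, e1, e2, e3, e4]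
  have d1 : r + 2 - 1 = r + 1 := by omega
  have d2 : r + 1 - 1 = r := by omega
  rw [d1, d2]
  have t1 : (r + 2) * (r + 1) / 2 = (r + 1) * r / 2 + (r + 1) := by
    have := tri (r + 1)
    simpa [d2] using this
  have t2 : (r + 1) * r / 2 = r * (r - 1) / 2 + r := tri r
  rw [t1, t2]
  have e5 : j + r + 2 = (j + r + 1) + 1 := by omega
  have e6 : j + r + 3 = ((j + r + 1) + 1) + 1 := by omega
  rw [e6, e5]
  rw [qPoch_succ q q ((j + r + 1) + 1), qPoch_succ q q (j + r + 1),
    qPoch_succ q q (r + 1), qPoch_succ q q r, qPoch_succ q q j]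
  have h1 := f_ne hq0 hq1 j
  have h2 := f_ne hq0 hq1 r
  have h3 := f_ne hq0 hq1 (j + r + 1)
  have h4 := fac_ne hq0 hq1 j
  have h5 := fac_ne hq0 hq1 r
  have h6 := fac_ne hq0 hq1 (r + 1)
  have h7 := fac_ne hq0 hq1 (j + r + 1)
  have h8 := fac_ne hq0 hq1 ((j + r + 1) + 1)
  field_simp [h1, h2, h3, h4, h5, h6, h7, h8]
  simp only [pow_add, pow_succ, pow_one, pow_zero]
  ring

set_option maxHeartbeats 1000000 in
lemma star (hq0 : 0 < q) (hq1 : q < 1) (hd : d ≠ 0) (m k : ℕ) :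
    (if k = 0 then 0 else Bz q d (m + 1) (k - 1)) + c * q ^ k * Bz q d (m + 1) k
      = Bz q d (m + 2) k + q ^ (m + 1) * (c - d) * Bz q d (m + 1) k
        + q ^ m * c * d * (1 - q ^ (m + 1)) * Bz q d m k := by
  rcases k with _ | j
  · rw [if_pos rfl]
    rw [Bz_of_le (m + 1) 0 (Nat.zero_le _), Bz_of_le (m + 2) 0 (Nat.zero_le _),
      Bz_of_le m 0 (Nat.zero_le _),
      Bc_zero hq0 hq1 (m + 1), Bc_zero hq0 hq1 (m + 2), Bc_zero hq0 hq1 m]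
    have d1 : m + 1 - 1 = m := by omega
    have d2 : m + 2 - 1 = m + 1 := by omega
    rw [d1, d2]
    have t1 : (m + 1) * m / 2 = m * (m - 1) / 2 + m := tri m
    have t2 : (m + 2) * (m + 1) / 2 = (m + 1) * m / 2 + (m + 1) := by
      have := tri (m + 1)
      simpa [d1] using this
    rw [t2, t1]
    simp only [pow_add, pow_succ, pow_one, pow_zero]
    ring
  · rw [if_neg (Nat.succ_ne_zero j)]
    simp only [Nat.add_sub_cancel]
    by_cases h1 : j + 1 ≤ m
    · obtain ⟨r, rfl⟩ : ∃ r, m = j + 1 + r := ⟨m - (j + 1), by omega⟩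
      rw [Bz_of_le (j + 1 + r + 1) j (by omega), Bz_of_le (j + 1 + r + 1) (j + 1) (by omega),
        Bz_of_le (j + 1 + r + 2) (j + 1) (by omega), Bz_of_le (j + 1 + r) (j + 1) (by omega)]
      rw [show j + 1 + r + 1 = j + r + 2 from by omega,
        show j + 1 + r + 2 = j + r + 3 from by omega,
        show j + 1 + r = j + r + 1 from by omega]
      exact gen hq0 hq1 hd j r
    · by_cases h2 : j = m
      · subst h2
        rw [Bz_of_gt j (j + 1) (by omega), Bz_of_le (j + 1) j (by omega),
          Bz_of_le (j + 1) (j + 1) (by omega), Bz_of_le (j + 2) (j + 1) (by omega),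
          Bc_self hq0 hq1 (j + 1)]
        simp only [Bc]
        rw [show j + 1 - j = 1 from by omega, show j + 2 - (j + 1) = 1 from by omega]
        norm_num
        rw [show j + 2 = (j + 1) + 1 from by omega]
        rw [qPoch_succ q q (j + 1), qPoch_succ q q j,
          show qPoch q q 1 = 1 - q from by simp [qPoch]]
        have h1' := f_ne hq0 hq1 j
        have h4 := fac_ne hq0 hq1 j
        have h7 := fac_ne hq0 hq1 (j + 1)
        have h9 : (1 : ℝ) - q ≠ 0 := sub_ne_zero.mpr hq1.ne'
        field_simp [h1', h4, h7, h9]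
        simp only [pow_add, pow_succ, pow_one, pow_zero]
        ring
      · by_cases h3 : j = m + 1
        · subst h3
          rw [show m + 1 + 1 = m + 2 from by omega]
          rw [Bz_of_le (m + 1) (m + 1) (by omega), Bc_self hq0 hq1 (m + 1),
            Bz_of_gt (m + 1) (m + 2) (by omega), Bz_of_le (m + 2) (m + 2) (by omega),
            Bc_self hq0 hq1 (m + 2), Bz_of_gt m (m + 2) (by omega)]
          ring
        · rw [Bz_of_gt (m + 1) j (by omega), Bz_of_gt (m + 1) (j + 1) (by omega),
            Bz_of_gt (m + 2) (j + 1) (by omega), Bz_of_gt m (j + 1) (by omega)]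
          ring

lemma starP (hq0 : 0 < q) (hq1 : q < 1) (hd : d ≠ 0) (m k : ℕ) :
    (if k = 0 then 0 else Bz q d (m + 1) (k - 1) * pik q c x k)
        + c * q ^ k * (Bz q d (m + 1) k * pik q c x k)
      = Bz q d (m + 2) k * pik q c x k
        + q ^ (m + 1) * (c - d) * (Bz q d (m + 1) k * pik q c x k)
        + q ^ m * c * d * (1 - q ^ (m + 1)) * (Bz q d m k * pik q c x k) := by
  have h := star (q := q) (c := c) (d := d) hq0 hq1 hd m k
  have h4 : (if k = 0 then 0 else Bz q d (m + 1) (k - 1) * pik q c x k)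
      = (if k = 0 then 0 else Bz q d (m + 1) (k - 1)) * pik q c x k := by
    split <;> simp
  rw [h4]
  linear_combination pik q c x k * h

set_option maxHeartbeats 1000000 in
lemma main (hq0 : 0 < q) (hq1 : q < 1) (hd : d ≠ 0) (hx : x ≠ 0) (m : ℕ) :
    x * PhatSeries q c d (m + 1) x
      = PhatSeries q c d (m + 2) x + q ^ (m + 1) * (c - d) * PhatSeries q c d (m + 1) x
        + q ^ m * c * d * (1 - q ^ (m + 1)) * PhatSeries q c d m x := by
  rw [Phat_eq hq0 hq1 hd hx (m + 1), Phat_eq hq0 hq1 hd hx (m + 2),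
    Phat_eq hq0 hq1 hd hx m]
  rw [sum_ext (m + 1) (m + 4) (by omega), sum_ext (m + 2) (m + 4) (by omega),
    sum_ext m (m + 4) (by omega)]
  calc x * ∑ k ∈ Finset.range (m + 4), Bz q d (m + 1) k * pik q c x k
      = ∑ k ∈ Finset.range (m + 4),
          (Bz q d (m + 1) k * pik q c x (k + 1)
            + c * q ^ k * (Bz q d (m + 1) k * pik q c x k)) := by
        rw [Finset.mul_sum]
        refine Finset.sum_congr rfl fun k _ => ?_
        rw [pik_succ]
        ring
    _ = (∑ k ∈ Finset.range (m + 4), Bz q d (m + 1) k * pik q c x (k + 1))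
        + ∑ k ∈ Finset.range (m + 4), c * q ^ k * (Bz q d (m + 1) k * pik q c x k) :=
        Finset.sum_add_distrib
    _ = (∑ k ∈ Finset.range (m + 4 + 1),
            (if k = 0 then 0 else Bz q d (m + 1) (k - 1) * pik q c x k))
        + ∑ k ∈ Finset.range (m + 4 + 1), c * q ^ k * (Bz q d (m + 1) k * pik q c x k) := by
        congr 1
        · symm
          rw [Finset.sum_range_succ']
          simp
        · symm
          rw [Finset.sum_range_succ, Bz_of_gt (m + 1) (m + 4) (by omega)]
          simp
    _ = ∑ k ∈ Finset.range (m + 4 + 1),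
          ((if k = 0 then 0 else Bz q d (m + 1) (k - 1) * pik q c x k)
            + c * q ^ k * (Bz q d (m + 1) k * pik q c x k)) := Finset.sum_add_distrib.symm
    _ = ∑ k ∈ Finset.range (m + 4 + 1),
          (Bz q d (m + 2) k * pik q c x k
            + q ^ (m + 1) * (c - d) * (Bz q d (m + 1) k * pik q c x k)
            + q ^ m * c * d * (1 - q ^ (m + 1)) * (Bz q d m k * pik q c x k)) :=
        Finset.sum_congr rfl fun k _ => starP hq0 hq1 hd m k
    _ = (∑ k ∈ Finset.range (m + 4), Bz q d (m + 2) k * pik q c x k)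
        + q ^ (m + 1) * (c - d) * ∑ k ∈ Finset.range (m + 4), Bz q d (m + 1) k * pik q c x k
        + q ^ m * c * d * (1 - q ^ (m + 1)) *
            ∑ k ∈ Finset.range (m + 4), Bz q d m k * pik q c x k := by
        rw [Finset.sum_add_distrib, Finset.sum_add_distrib, ← Finset.mul_sum, ← Finset.mul_sum,
          sum_ext' (m + 2) (m + 4 + 1) (m + 4) (by omega) (by omega),
          sum_ext' (m + 1) (m + 4 + 1) (m + 4) (by omega) (by omega),
          sum_ext' m (m + 4 + 1) (m + 4) (by omega) (by omega)]

end BigQJ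

/-- Three-term recurrence for the monic big q-Jacobi polynomials with `a = b = 0`. -/
theorem bigqJacobi_three_term_recurrence (q c d : ℝ) (hq0 : 0 < q) (hq1 : q < 1)
    (hc : c ≠ 0) (hd : d ≠ 0) :
    (∀ x : ℝ, x ≠ 0 → PhatSeries q c d 0 x = 1) ∧
    (∀ x : ℝ, x ≠ 0 →
      x * PhatSeries q c d 0 x = PhatSeries q c d 1 x + (c - d) * PhatSeries q c d 0 x) ∧
    (∀ n : ℕ, 1 ≤ n → ∀ x : ℝ, x ≠ 0 →
      x * PhatSeries q c d n x
        = PhatSeries q c d (n + 1) x + q ^ n * (c - d) * PhatSeries q c d n x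
          + q ^ (n - 1) * c * d * (1 - q ^ n) * PhatSeries q c d (n - 1) x) := by
  have h0 : ∀ x : ℝ, x ≠ 0 → PhatSeries q c d 0 x = 1 := by
    intro x hx
    simp [PhatSeries, qPoch]
  refine ⟨h0, ?_, ?_⟩
  · intro x hx
    rw [h0 x hx, BigQJ.Phat_eq hq0 hq1 hd hx 1]
    rw [Finset.sum_range_succ, Finset.sum_range_succ, Finset.sum_range_zero,
      BigQJ.Bc_self hq0 hq1 1, BigQJ.Bc_zero hq0 hq1 1]
    simp [BigQJ.pik]
    ring
  · intro n hn x hx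
    obtain ⟨m, rfl⟩ : ∃ m, n = m + 1 := ⟨n - 1, by omega⟩
    have h := BigQJ.main (c := c) hq0 hq1 hd hx m
    simpa using h
end

section
/- Special case of the addition formula (degenerate little q-Legendre case): for nonnegative integers l, p and all x, p_l(x;1,1;q)·(q^{1-p}x;q)_p = Σ_{m=0}^l (q^{m(m-l+p)} (q;q)_{l+m}/((q;q)_{l-m}(q;q)_m²)) · p_{l-m}(q^p;q^m,q^m;q) · (q^{1-p-m}x;q)_{p+m}. -/
/-- little q-Jacobi polynomial `p_n(x;a,b;q) = ₂φ₁(q^{-n}, q^{n+1}ab; qa; q, qx)`. -/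
noncomputable def littleqJacobi (q a b : ℝ) (n : ℕ) (x : ℝ) : ℝ :=
  ∑ k ∈ Finset.range (n + 1),
    qPoch q (q ^ (-(n : ℤ))) k * qPoch q (q ^ (n + 1) * a * b) k
      / (qPoch q (q * a) k * qPoch q q k) * (q * x) ^ k


section aux
variable {q : ℝ}

lemma qPoch_zero (a : ℝ) : qPoch q a 0 = 1 := by simp [qPoch]

lemma qPoch_succ (a : ℝ) (n : ℕ) : qPoch q a (n+1) = qPoch q a n * (1 - a * q ^ n) := by
  simp [qPoch, Finset.prod_range_succ]

lemma qPoch_add (a : ℝ) (m n : ℕ) : qPoch q a (m+n) = qPoch q a m * qPoch q (a * q ^ m) n := by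
  unfold qPoch
  rw [Finset.prod_range_add]
  congr 1
  refine Finset.prod_congr rfl fun j _ => ?_
  rw [pow_add]; ring

lemma Pq_pos (hq0 : 0 < q) (hq1 : q < 1) (n : ℕ) : 0 < qPoch q q n := by
  unfold qPoch
  apply Finset.prod_pos
  intro j _
  have h : q * q ^ j = q ^ (j+1) := by rw [pow_succ]; ring
  have : q ^ (j+1) < 1 := pow_lt_one₀ hq0.le hq1 (Nat.succ_ne_zero j)
  rw [h]; linarith

lemma Pne (hq0 : 0 < q) (hq1 : q < 1) (n : ℕ) : qPoch q q n ≠ 0 := ne_of_gt (Pq_pos hq0 hq1 n)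

lemma tri_succ (n : ℕ) : (n+1)*((n+1)-1)/2 = n*(n-1)/2 + n := by
  rcases n with _ | m
  · rfl
  · have h : (m+1+1)*((m+1+1)-1) = (m+1)*((m+1)-1) + (m+1)*2 := by
      simp only [Nat.add_sub_cancel]; ring
    rw [h, Nat.add_mul_div_right _ _ (by norm_num : 0 < 2)]

lemma tri_add (a b : ℕ) : (a+b)*((a+b)-1)/2 = a*(a-1)/2 + b*(b-1)/2 + a*b := by
  induction b with
  | zero => simp
  | succ b ih =>
    have h1 : a + (b+1) = (a+b) + 1 := by omega
    rw [h1, tri_succ, ih, tri_succ, Nat.mul_succ]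
    omega
end aux
section aux2
variable {q : ℝ}

lemma E1 (hq0 : 0 < q) (hq1 : q < 1) (c j : ℕ) :
    qPoch q (q ^ (c+1)) j = qPoch q q (c+j) / qPoch q q c := by
  rw [eq_div_iff (Pne hq0 hq1 c), qPoch_add q c j]
  rw [show q * q ^ c = q ^ (c+1) by rw [pow_succ]; ring]
  ring

lemma zpow_split (hq : q ≠ 0) (a b : ℕ) : (q:ℝ)^((a:ℤ)-b) = q^a / q^b := by
  rw [zpow_sub₀ hq, zpow_natCast, zpow_natCast]

lemma zpow_neg_nat (hq : q ≠ 0) (n : ℕ) : (q:ℝ)^(-(n:ℤ)) = 1 / q^n := by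
  rw [zpow_neg, zpow_natCast, one_div]

lemma E2 (hq0 : 0 < q) (hq1 : q < 1) (n k : ℕ) (h : k ≤ n) :
    qPoch q (q ^ (-(n:ℤ))) k
      = (-1)^k * q^(k*(k-1)/2) * qPoch q q n / (q^(n*k) * qPoch q q (n-k)) := by
  have hq : q ≠ 0 := ne_of_gt hq0
  induction k with
  | zero => simp [qPoch_zero, Pne hq0 hq1 n]
  | succ k ih =>
    have hk : k ≤ n := by omega
    obtain ⟨e, rfl⟩ : ∃ e, n = k + 1 + e := ⟨n - (k+1), by omega⟩
    rw [qPoch_succ, ih hk, zpow_neg_nat hq]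
    rw [show k+1+e - k = e + 1 from by omega, show k+1+e-(k+1) = e from by omega]
    rw [qPoch_succ q e]
    rw [show (k+1)*((k+1)-1)/2 = k*(k-1)/2 + k from tri_succ k]
    have hP := Pne hq0 hq1 e
    have hpow : (q:ℝ)^(k+1+e) ≠ 0 := pow_ne_zero _ hq
    have hne : (1:ℝ) - q * q^e ≠ 0 := by
      have h1 : q * q ^ e = q ^ (e+1) := by rw [pow_succ]; ring
      have h2 : q ^ (e+1) < 1 := pow_lt_one₀ hq0.le hq1 (Nat.succ_ne_zero e)
      rw [h1]; intro hc; linarith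
    field_simp
    ring

/-- q-binomial coefficient term -/
noncomputable def Cc (q : ℝ) (n k : ℕ) : ℝ :=
  (-1)^k * q^(k*(k-1)/2) * (qPoch q q n / (qPoch q q k * qPoch q q (n-k)))

lemma Cc_zero (hq0 : 0 < q) (hq1 : q < 1) (n : ℕ) : Cc q n 0 = 1 := by
  simp [Cc, qPoch_zero, Pne hq0 hq1 n]

end aux2
section aux3
variable {q : ℝ}

lemma Cc_diag (hq0 : 0 < q) (hq1 : q < 1) (n : ℕ) :
    Cc q n n = (-1)^n * q^(n*(n-1)/2) := by
  simp [Cc, qPoch_zero, Pne hq0 hq1 n]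

lemma Cc_pascal (hq0 : 0 < q) (hq1 : q < 1) (n k : ℕ) (h : k < n) :
    Cc q (n+1) (k+1) = Cc q n (k+1) - q^n * Cc q n k := by
  obtain ⟨e, rfl⟩ : ∃ e, n = k + 1 + e := ⟨n - (k+1), by omega⟩
  unfold Cc
  rw [show k+1+e+1-(k+1) = e+1 from by omega, show k+1+e-(k+1) = e from by omega,
    show k+1+e-k = e+1 from by omega]
  rw [show (k+1)*((k+1)-1)/2 = k*(k-1)/2 + k from tri_succ k]
  rw [show k+1+e+1 = (k+e+1)+1 from by omega, show k+1+e = k+e+1 from by omega]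
  rw [qPoch_succ q (k+e+1), qPoch_succ q e, qPoch_succ q k]
  have h1 := Pne hq0 hq1 e
  have h2 := Pne hq0 hq1 k
  have h3 := Pne hq0 hq1 (k+e+1)
  have hne : ∀ m : ℕ, (1:ℝ) - q * q^m ≠ 0 := by
    intro m
    have ha : q * q ^ m = q ^ (m+1) := by rw [pow_succ]; ring
    have hb : q ^ (m+1) < 1 := pow_lt_one₀ hq0.le hq1 (Nat.succ_ne_zero m)
    rw [ha]; intro hc; linarith
  have hk' := hne k
  have he' := hne e
  have h3' := hne (k+e+1)
  field_simp
  ring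

lemma L2 (hq0 : 0 < q) (hq1 : q < 1) (a : ℝ) (n : ℕ) :
    qPoch q a n = ∑ k ∈ Finset.range (n+1), Cc q n k * a^k := by
  induction n with
  | zero => simp [qPoch_zero, Cc_zero hq0 hq1]
  | succ n ih =>
    rw [qPoch_succ, ih]
    have expand : (∑ k ∈ Finset.range (n+1), Cc q n k * a^k) * (1 - a * q^n)
        = ∑ k ∈ Finset.range (n+1), Cc q n k * a^k
          - ∑ k ∈ Finset.range (n+1), q^n * Cc q n k * a^(k+1) := by
      rw [mul_sub, mul_one, Finset.sum_mul]
      congr 1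
      refine Finset.sum_congr rfl fun k _ => ?_
      ring
    rw [expand]
    rw [Finset.sum_range_succ' (fun k => Cc q (n+1) k * a^k) (n+1)]
    rw [Finset.sum_range_succ (fun k => Cc q (n+1) (k+1) * a^(k+1)) n]
    rw [Finset.sum_range_succ' (fun k => Cc q n k * a^k) n]
    rw [Finset.sum_range_succ (fun k => q^n * Cc q n k * a^(k+1)) n]
    have hdiag : Cc q (n+1) (n+1) = -(q^n * Cc q n n) := by
      rw [Cc_diag hq0 hq1, Cc_diag hq0 hq1,
        show (n+1)*((n+1)-1)/2 = n*(n-1)/2 + n from tri_succ n, pow_add]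
      ring
    have hps : ∑ k ∈ Finset.range n, Cc q (n+1) (k+1) * a^(k+1)
        = ∑ k ∈ Finset.range n, (Cc q n (k+1) * a^(k+1) - q^n * Cc q n k * a^(k+1)) := by
      refine Finset.sum_congr rfl fun k hk => ?_
      rw [Cc_pascal hq0 hq1 n k (Finset.mem_range.mp hk)]
      ring
    rw [hps, hdiag, Cc_zero hq0 hq1, Cc_zero hq0 hq1, Finset.sum_sub_distrib]
    ring

lemma gsum (hq0 : 0 < q) (hq1 : q < 1) (s : ℕ) :
    ∑ i ∈ Finset.range (s+1), Cc q s i = if s = 0 then 1 else 0 := by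
  have h := L2 hq0 hq1 1 s
  simp only [one_pow, mul_one] at h
  rw [← h]
  rcases s with _ | t
  · simp [qPoch_zero]
  · simp only [if_neg (Nat.succ_ne_zero t)]
    unfold qPoch
    apply Finset.prod_eq_zero (Finset.mem_range.mpr (Nat.succ_pos t))
    simp

end aux3
/-- triple-sum summand -/
noncomputable def Ssum (q x : ℝ) (l p m j k : ℕ) : ℝ :=
  q ^ ((m : ℤ) * ((m : ℤ) - l + p)) * qPoch q q (l + m) / (qPoch q q (l - m) * qPoch q q m ^ 2)
  * (qPoch q (q ^ (-((l - m : ℕ) : ℤ))) j * qPoch q (q ^ ((l - m) + 1) * q ^ m * q ^ m) j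
      / (qPoch q (q * q ^ m) j * qPoch q q j) * (q * q ^ p) ^ j)
  * (Cc q m k * (q ^ ((1:ℤ) - p - m) * x) ^ k)

/-- normal form of the summand -/
noncomputable def NF (q x : ℝ) (p k i j d : ℕ) : ℝ :=
  (-1)^(j+k) * q^(j*(j-1)/2) * q^(k*(k-1)/2)
    * (q^((k+i)*p + (p+1)*j + k) / q^((k+i)*(j+d) + (j+d)*j + (p+k+i)*k))
    * qPoch q q (2*k+2*i+2*j+d)
    / (qPoch q q d * qPoch q q (k+i+j) * qPoch q q j * qPoch q q k * qPoch q q i)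
    * x^k

section mains
variable {q : ℝ}

lemma Sval (hq0 : 0 < q) (hq1 : q < 1) (p k i j d : ℕ) (x : ℝ) :
    Ssum q x (k+i+j+d) p (k+i) j k = NF q x p k i j d := by
  have hq : q ≠ 0 := ne_of_gt hq0
  unfold Ssum NF Cc
  rw [show k+i+j+d - (k+i) = j+d from by omega]
  rw [show k+i+j+d + (k+i) = 2*k+2*i+j+d from by omega]
  rw [show (k+i) - k = i from by omega]
  rw [E2 hq0 hq1 (j+d) j (by omega), show j+d-j = d from by omega]
  rw [show q ^ ((j+d)+1) * q ^ (k+i) * q ^ (k+i) = q ^ ((2*k+2*i+j+d)+1) from by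
    rw [← pow_add, ← pow_add]; congr 1; omega]
  rw [E1 hq0 hq1 (2*k+2*i+j+d) j, show 2*k+2*i+j+d+j = 2*k+2*i+2*j+d from by omega]
  rw [show q * q ^ (k+i) = q ^ ((k+i)+1) from by rw [pow_succ]; ring]
  rw [E1 hq0 hq1 (k+i) j, show (k+i)+j = k+i+j from by omega]
  rw [show q * q ^ p = q ^ (p+1) from by rw [pow_succ]; ring, ← pow_mul]
  rw [show ((k+i:ℕ):ℤ) * (((k+i:ℕ):ℤ) - ((k+i+j+d:ℕ):ℤ) + ((p:ℕ):ℤ))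
      = (((k+i)*p:ℕ):ℤ) - (((k+i)*(j+d):ℕ):ℤ) from by push_cast; ring]
  rw [zpow_split hq ((k+i)*p) ((k+i)*(j+d))]
  rw [show (1:ℤ) - ((p:ℕ):ℤ) - ((k+i:ℕ):ℤ) = ((1:ℕ):ℤ) - ((p+k+i:ℕ):ℤ) from by push_cast; ring]
  rw [zpow_split hq 1 (p+k+i)]
  have P1 := Pne hq0 hq1 d
  have P2 := Pne hq0 hq1 (k+i+j)
  have P3 := Pne hq0 hq1 j
  have P4 := Pne hq0 hq1 k
  have P5 := Pne hq0 hq1 i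
  have P6 := Pne hq0 hq1 (k+i)
  have P7 := Pne hq0 hq1 (2*k+2*i+j+d)
  have P8 := Pne hq0 hq1 (j+d)
  have Q1 : (q:ℝ)^((j+d)*j) ≠ 0 := pow_ne_zero _ hq
  have Q2 : (q:ℝ)^((k+i)*(j+d)) ≠ 0 := pow_ne_zero _ hq
  have Q3 : (q:ℝ)^(p+k+i) ≠ 0 := pow_ne_zero _ hq
  field_simp
  ring_nf
  simp only [inv_pow]
  field_simp
  ring
end mains
section mains2
variable {q : ℝ}

lemma tri_sq (q : ℝ) (i : ℕ) : (q:ℝ)^(i*(i-1)/2) * q^(i*(i-1)/2) * q^i = q^(i*i) := by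
  induction i with
  | zero => simp
  | succ i ih =>
    rw [tri_succ]
    linear_combination (q^i * q^i * q) * ih

lemma pow_tri_add (q : ℝ) (a b : ℕ) :
    (q:ℝ)^((a+b)*((a+b)-1)/2) = q^(a*(a-1)/2) * q^(b*(b-1)/2) * q^(a*b) := by
  rw [tri_add, pow_add, pow_add]

noncomputable def NFnum (q x : ℝ) (p k i j d : ℕ) : ℝ :=
  (-1)^(j+k) * q^(j*(j-1)/2) * q^(k*(k-1)/2) * q^((k+i)*p + (p+1)*j + k)
    * qPoch q q (2*k+2*i+2*j+d) * x^k

noncomputable def NFden (q : ℝ) (p k i j d : ℕ) : ℝ :=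
  q^((k+i)*(j+d) + (j+d)*j + (p+k+i)*k)
    * (qPoch q q d * qPoch q q (k+i+j) * qPoch q q j * qPoch q q k * qPoch q q i)

lemma NF_eq (q x : ℝ) (p k i j d : ℕ) :
    NF q x p k i j d = NFnum q x p k i j d / NFden q p k i j d := by
  unfold NF NFnum NFden; ring

lemma NFden_ne (hq0 : 0 < q) (hq1 : q < 1) (p k i j d : ℕ) : NFden q p k i j d ≠ 0 := by
  unfold NFden
  exact mul_ne_zero (pow_ne_zero _ (ne_of_gt hq0))
    (mul_ne_zero (mul_ne_zero (mul_ne_zero (mul_ne_zero (Pne hq0 hq1 d) (Pne hq0 hq1 _))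
      (Pne hq0 hq1 j)) (Pne hq0 hq1 k)) (Pne hq0 hq1 i))

lemma CcEq (i j : ℕ) :
    Cc q (i+j) i = ((-1)^i * q^(i*(i-1)/2) * qPoch q q (i+j)) / (qPoch q q i * qPoch q q j) := by
  unfold Cc
  rw [show (i+j)-i = j from by omega]
  ring

lemma NFcore (q x : ℝ) (p k i j d : ℕ) :
    NFnum q x p k i j d * (NFden q p k 0 (i+j) d * (qPoch q q i * qPoch q q j))
        * (q^(i*(i-1)/2) * q^(i*(i-1)/2) * q^i)
      = NFnum q x p k 0 (i+j) d * ((-1)^i * q^(i*(i-1)/2) * qPoch q q (i+j))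
        * NFden q p k i j d * q^(i*i) := by
  unfold NFnum NFden
  rw [pow_tri_add q i j]
  rw [show 2*k+2*0+2*(i+j)+d = 2*k+2*i+2*j+d from by omega]
  rw [show k+0+(i+j) = k+i+j from by omega]
  simp only [qPoch_zero]
  ring_nf
  rw [show ((-1:ℝ))^(i*2) = 1 from by rw [mul_comm i 2, pow_mul, neg_one_sq, one_pow]]
  ring

lemma NFsplit (hq0 : 0 < q) (hq1 : q < 1) (p k i j d : ℕ) (x : ℝ) :
    NF q x p k i j d = NF q x p k 0 (i+j) d * Cc q (i+j) i := by
  have hq : q ≠ 0 := ne_of_gt hq0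
  rw [NF_eq, NF_eq, CcEq, div_mul_div_comm, div_eq_div_iff (NFden_ne hq0 hq1 p k i j d)
    (mul_ne_zero (NFden_ne hq0 hq1 p k 0 (i+j) d) (mul_ne_zero (Pne hq0 hq1 i) (Pne hq0 hq1 j)))]
  refine mul_right_cancel₀ (b := (q:ℝ)^(i*(i-1)/2) * q^(i*(i-1)/2) * q^i)
    (by exact mul_ne_zero (mul_ne_zero (pow_ne_zero _ hq) (pow_ne_zero _ hq)) (pow_ne_zero _ hq)) ?_
  have core := NFcore q x p k i j d
  rw [← tri_sq q i] at core
  linear_combination core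

lemma claim3 (hq0 : 0 < q) (hq1 : q < 1) (p k d : ℕ) (x : ℝ) :
    qPoch q (q ^ (-((k+d:ℕ):ℤ))) k * qPoch q (q ^ ((k+d)+1) * 1 * 1) k
      / (qPoch q (q * 1) k * qPoch q q k) * (q * x) ^ k
    = NF q x p k 0 0 (d) := by
  have hq : q ≠ 0 := ne_of_gt hq0
  unfold NF
  rw [E2 hq0 hq1 (k+d) k (by omega), show k+d-k = d from by omega]
  rw [show q ^ ((k+d)+1) * 1 * 1 = q ^ ((k+d)+1) from by ring]
  rw [E1 hq0 hq1 (k+d) k, show k+d+k = 2*k+2*0+2*0+d from by omega]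
  rw [mul_one, mul_pow]
  have P1 := Pne hq0 hq1 d
  have P2 := Pne hq0 hq1 k
  have P3 := Pne hq0 hq1 (k+d)
  have P4 := Pne hq0 hq1 0
  have P5 := Pne hq0 hq1 (k+0+0)
  have Q1 : (q:ℝ)^((k+d)*k) ≠ 0 := pow_ne_zero _ hq
  have Q2 : (q:ℝ)^((k+0)*(0+d) + (0+d)*0 + (p+k+0)*k) ≠ 0 := pow_ne_zero _ hq
  simp only [qPoch_zero]
  field_simp
  ring
end mains2
section assembly
variable {q : ℝ}

lemma claim1 (hq0 : 0 < q) (hq1 : q < 1) (l p m j k : ℕ) (x : ℝ)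
    (hm : m ≤ l) (hj : j ≤ l - m) (hk : k ≤ m) :
    Ssum q x l p m j k
      = NF q x p k 0 (j+m-k) (l-k-(j+m-k)) * Cc q (j+m-k) (m-k) := by
  obtain ⟨i, rfl⟩ : ∃ i, m = k + i := ⟨m-k, by omega⟩
  obtain ⟨d, hd⟩ : ∃ d, l = k+i+j+d := ⟨l-(k+i)-j, by omega⟩
  subst hd
  rw [Sval hq0 hq1 p k i j d x, NFsplit hq0 hq1 p k i j d x]
  rw [show j+(k+i)-k = i+j from by omega, show (k+i)-k = i from by omega,
    show k+i+j+d-k-(i+j) = d from by omega]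

lemma stepB (hq0 : 0 < q) (hq1 : q < 1) (l p : ℕ) (x : ℝ) :
    littleqJacobi q 1 1 l x
      = ∑ m ∈ Finset.range (l+1),
          q ^ ((m:ℤ) * ((m:ℤ) - l + p)) * qPoch q q (l + m)
            / (qPoch q q (l - m) * qPoch q q m ^ 2)
            * littleqJacobi q (q^m) (q^m) (l-m) (q^p)
            * qPoch q (q ^ ((1:ℤ) - p - m) * x) m := by
  have hexp : ∀ m ∈ Finset.range (l+1),
      q ^ ((m:ℤ) * ((m:ℤ) - l + p)) * qPoch q q (l + m)
          / (qPoch q q (l - m) * qPoch q q m ^ 2)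
          * littleqJacobi q (q^m) (q^m) (l-m) (q^p)
          * qPoch q (q ^ ((1:ℤ) - p - m) * x) m
        = ∑ j ∈ Finset.range (l-m+1), ∑ k ∈ Finset.range (m+1), Ssum q x l p m j k := by
    intro m hm
    rw [littleqJacobi, L2 hq0 hq1 (q ^ ((1:ℤ) - p - m) * x) m, mul_assoc, Finset.sum_mul_sum,
      Finset.mul_sum]
    refine Finset.sum_congr rfl fun j _ => ?_
    rw [Finset.mul_sum]
    refine Finset.sum_congr rfl fun k _ => ?_
    unfold Ssum
    ring
  rw [Finset.sum_congr rfl hexp]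
  -- reindex the triple sum
  have hre : ∑ m ∈ Finset.range (l+1), ∑ j ∈ Finset.range (l-m+1), ∑ k ∈ Finset.range (m+1),
        Ssum q x l p m j k
      = ∑ k ∈ Finset.range (l+1), ∑ s ∈ Finset.range (l-k+1), ∑ i ∈ Finset.range (s+1),
          NF q x p k 0 s (l-k-s) * Cc q s i := by
    have h1 : ∑ u ∈ (Finset.range (l+1)).sigma
          (fun m => (Finset.range (l-m+1)).sigma (fun _ => Finset.range (m+1))),
          Ssum q x l p u.1 u.2.1 u.2.2
        = ∑ m ∈ Finset.range (l+1), ∑ j ∈ Finset.range (l-m+1), ∑ k ∈ Finset.range (m+1),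
            Ssum q x l p m j k := by
      rw [Finset.sum_sigma]
      exact Finset.sum_congr rfl fun m _ => by rw [Finset.sum_sigma]
    have h2 : ∑ u ∈ (Finset.range (l+1)).sigma
          (fun k => (Finset.range (l-k+1)).sigma (fun s => Finset.range (s+1))),
          (NF q x p u.1 0 u.2.1 (l-u.1-u.2.1) * Cc q u.2.1 u.2.2)
        = ∑ k ∈ Finset.range (l+1), ∑ s ∈ Finset.range (l-k+1), ∑ i ∈ Finset.range (s+1),
            NF q x p k 0 s (l-k-s) * Cc q s i := by
      rw [Finset.sum_sigma]
      exact Finset.sum_congr rfl fun m _ => by rw [Finset.sum_sigma]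
    rw [← h1, ← h2]
    refine Finset.sum_nbij' (i := fun u => ⟨u.2.2, u.2.1 + u.1 - u.2.2, u.1 - u.2.2⟩)
      (j := fun u => ⟨u.1 + u.2.2, u.2.1 - u.2.2, u.1⟩) ?_ ?_ ?_ ?_ ?_
    · rintro ⟨m, j, k⟩ hu
      simp only [Finset.mem_sigma, Finset.mem_range] at hu ⊢
      omega
    · rintro ⟨k, s, i⟩ hu
      simp only [Finset.mem_sigma, Finset.mem_range] at hu ⊢
      omega
    · rintro ⟨m, j, k⟩ hu
      simp only [Finset.mem_sigma, Finset.mem_range] at hu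
      have e1 : k + (m-k) = m := by omega
      have e2 : (j+m-k)-(m-k) = j := by omega
      dsimp only
      rw [e1, e2]
    · rintro ⟨k, s, i⟩ hu
      simp only [Finset.mem_sigma, Finset.mem_range] at hu
      have e1 : (s-i) + (k+i) - k = s := by omega
      have e2 : (k+i) - k = i := by omega
      dsimp only
      rw [e1, e2]
    · rintro ⟨m, j, k⟩ hu
      simp only [Finset.mem_sigma, Finset.mem_range] at hu
      exact claim1 hq0 hq1 l p m j k x (by omega) (by omega) (by omega)
  rw [hre]
  have hcol : ∀ k ∈ Finset.range (l+1),
      ∑ s ∈ Finset.range (l-k+1), ∑ i ∈ Finset.range (s+1), NF q x p k 0 s (l-k-s) * Cc q s i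
        = NF q x p k 0 0 (l-k) := by
    intro k hk
    have hsum : ∀ s ∈ Finset.range (l-k+1),
        ∑ i ∈ Finset.range (s+1), NF q x p k 0 s (l-k-s) * Cc q s i
          = NF q x p k 0 s (l-k-s) * (if s = 0 then 1 else 0) := by
      intro s _
      rw [← Finset.mul_sum, gsum hq0 hq1 s]
    rw [Finset.sum_congr rfl hsum]
    rw [Finset.sum_eq_single 0 (fun b _ hb => by simp [hb])
      (fun h => absurd (Finset.mem_range.mpr (by omega)) h)]
    simp
  rw [Finset.sum_congr rfl hcol, littleqJacobi]
  refine Finset.sum_congr rfl fun k hk => ?_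
  have hkl : k ≤ l := by simpa using Nat.lt_succ_iff.mp (Finset.mem_range.mp hk)
  obtain ⟨d, rfl⟩ : ∃ d, l = k + d := ⟨l - k, by omega⟩
  rw [show k + d - k = d from by omega]
  exact claim3 hq0 hq1 p k d x
end assembly

/-- Degenerate (little q-Legendre) special case of the addition formula. -/
theorem little_qLegendre_addition_special_case (q : ℝ) (hq0 : 0 < q) (hq1 : q < 1)
    (l p : ℕ) (x : ℝ) :
    littleqJacobi q 1 1 l x * qPoch q (q ^ ((1 : ℤ) - p) * x) p
      = ∑ m ∈ Finset.range (l + 1),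
          q ^ ((m : ℤ) * ((m : ℤ) - l + p)) * qPoch q q (l + m)
            / (qPoch q q (l - m) * (qPoch q q m) ^ 2)
            * littleqJacobi q (q ^ m) (q ^ m) (l - m) (q ^ p)
            * qPoch q (q ^ ((1 : ℤ) - p - m) * x) (p + m) := by
  have hq : q ≠ 0 := ne_of_gt hq0
  have hsplit : ∀ m ∈ Finset.range (l+1),
      q ^ ((m : ℤ) * ((m : ℤ) - l + p)) * qPoch q q (l + m)
          / (qPoch q q (l - m) * (qPoch q q m) ^ 2)
          * littleqJacobi q (q ^ m) (q ^ m) (l - m) (q ^ p)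
          * qPoch q (q ^ ((1 : ℤ) - p - m) * x) (p + m)
        = (q ^ ((m : ℤ) * ((m : ℤ) - l + p)) * qPoch q q (l + m)
            / (qPoch q q (l - m) * (qPoch q q m) ^ 2)
            * littleqJacobi q (q ^ m) (q ^ m) (l - m) (q ^ p)
            * qPoch q (q ^ ((1 : ℤ) - p - m) * x) m) * qPoch q (q ^ ((1 : ℤ) - p) * x) p := by
    intro m _
    rw [show p + m = m + p from by omega, qPoch_add (q ^ ((1:ℤ) - p - m) * x) m p]
    have hb : q ^ ((1:ℤ) - p - m) * x * q ^ (m:ℕ) = q ^ ((1:ℤ) - p) * x := by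
      rw [mul_right_comm, ← zpow_natCast q m, ← zpow_add₀ hq]
      congr 2
      ring
    rw [hb]
    ring
  rw [Finset.sum_congr rfl hsplit, ← Finset.sum_mul, ← stepB hq0 hq1 l p x]
end
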